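/- The function h : [0,1] → ℝ defined piecewise by h(y) = 1/4 + y/2 − (1/4)·e^{−2y} for 0 ≤ y ≤ 1/2, and h(y) = 1 − e^{−2y}·((e+1)/4 + (e/2)·y) for 1/2 ≤ y ≤ 1, is well defined (the two formulas agree at y = 1/2, both equal to 1/2 − 1/(4e)) and concave on the interval [0,1]. -/

import Mathlib

open Real

noncomputable def g1 (y : ℝ) : ℝ := 1/4 + y/2 - (1/4) * exp (-2 * y)
noncomputable def g2 (y : ℝ) : ℝ := 1 - exp (-2 * y) * ((exp 1 + 1)/4 + (exp 1 / 2) * y)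
noncomputable def d1 (y : ℝ) : ℝ := 1/2 + exp (-2 * y) / 2
noncomputable def d2 (y : ℝ) : ℝ := exp (-2 * y) * (1/2 + exp 1 * y)

lemma hg1 (y : ℝ) : HasDerivAt g1 (d1 y) y := by
  have h : HasDerivAt (fun y : ℝ => exp (-2 * y)) (exp (-2 * y) * (-2)) y := by
    simpa using ((hasDerivAt_id y).const_mul (-2)).exp
  have := ((hasDerivAt_const y (1/4 : ℝ)).add ((hasDerivAt_id y).div_const 2)).sub
    (h.const_mul (1/4))
  refine this.congr_deriv ?_
  unfold d1; ring

lemma hg2 (y : ℝ) : HasDerivAt g2 (d2 y) y := by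
  have h : HasDerivAt (fun y : ℝ => exp (-2 * y)) (exp (-2 * y) * (-2)) y := by
    simpa using ((hasDerivAt_id y).const_mul (-2)).exp
  have h2 : HasDerivAt (fun y : ℝ => (exp 1 + 1)/4 + (exp 1 / 2) * y) (exp 1 / 2) y := by
    simpa using ((hasDerivAt_id y).const_mul (exp 1 / 2)).const_add ((exp 1 + 1)/4)
  have := (hasDerivAt_const y (1 : ℝ)).sub (h.mul h2)
  refine this.congr_deriv ?_
  unfold d2; ring

lemma junction : g1 (1/2) = g2 (1/2) := by
  unfold g1 g2
  rw [show (-2 : ℝ) * (1/2) = -1 by ring, exp_neg]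
  have : exp 1 > 0 := exp_pos 1
  field_simp
  ring

lemma djunction : d1 (1/2) = d2 (1/2) := by
  unfold d1 d2
  rw [show (-2 : ℝ) * (1/2) = -1 by ring, exp_neg]
  have : exp 1 > 0 := exp_pos 1
  field_simp
  ring

lemma d2_antitone : AntitoneOn d2 (Set.Ici (1/2 : ℝ)) := by
  intro x hx y hy hxy
  simp only [Set.mem_Ici] at hx hy
  unfold d2
  have hE : exp (2 * (y - x)) ≥ 1 + 2 * (y - x) := by
    have := add_one_le_exp (2 * (y - x)); linarith
  have hx0 : exp (-2 * x) = exp (-2 * y) * exp (2 * (y - x)) := by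
    rw [← exp_add]; ring_nf
  rw [hx0]
  have hy0 : (0 : ℝ) < exp (-2 * y) := exp_pos _
  have he : (2 : ℝ) ≤ exp 1 := by
    have := add_one_le_exp (1 : ℝ); linarith
  have key : (1 + 2 * (y - x)) * (1/2 + exp 1 * x) ≥ 1/2 + exp 1 * y := by
    nlinarith [mul_nonneg (sub_nonneg.2 hxy) (mul_nonneg (by positivity : (0:ℝ) ≤ exp 1) (by linarith : (0:ℝ) ≤ x))]
  have hpos : (0:ℝ) ≤ 1/2 + exp 1 * x := by positivity
  calc exp (-2 * y) * exp (2 * (y - x)) * (1/2 + exp 1 * x)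
      ≥ exp (-2 * y) * ((1 + 2 * (y - x)) * (1/2 + exp 1 * x)) := by
        rw [mul_assoc]
        exact mul_le_mul_of_nonneg_left (mul_le_mul_of_nonneg_right hE hpos) hy0.le
    _ ≥ exp (-2 * y) * (1/2 + exp 1 * y) := mul_le_mul_of_nonneg_left key hy0.le

noncomputable def d (y : ℝ) : ℝ := if y ≤ 1/2 then d1 y else d2 y

noncomputable def f (y : ℝ) : ℝ := if y ≤ 1/2 then g1 y else g2 y

lemma f_eq_g2 : ∀ y ∈ Set.Ici (1/2 : ℝ), f y = g2 y := by
  intro y hy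
  unfold f
  rcases lt_or_eq_of_le (Set.mem_Ici.mp hy) with h | h
  · rw [if_neg (not_le.mpr h)]
  · rw [← h, if_pos le_rfl, junction]

lemma f_eq_g1 : ∀ y ∈ Set.Iic (1/2 : ℝ), f y = g1 y := by
  intro y hy; unfold f; rw [if_pos (Set.mem_Iic.mp hy)]

lemma hf (y : ℝ) : HasDerivAt f (d y) y := by
  rcases lt_trichotomy y (1/2 : ℝ) with h | h | h
  · have : f =ᶠ[nhds y] g1 := by
      filter_upwards [Iio_mem_nhds h] with z hz
      exact f_eq_g1 z (Set.mem_Iic.mpr (le_of_lt hz))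
    have hd : d y = d1 y := if_pos h.le
    rw [hd]
    exact (hg1 y).congr_of_eventuallyEq this
  · subst h
    have h1 : HasDerivWithinAt f (d1 (1/2)) (Set.Iic (1/2 : ℝ)) (1/2) :=
      ((hg1 _).hasDerivWithinAt).congr f_eq_g1 (f_eq_g1 _ (Set.mem_Iic.mpr le_rfl))
    have h2 : HasDerivWithinAt f (d1 (1/2)) (Set.Ici (1/2 : ℝ)) (1/2) := by
      rw [djunction]
      exact ((hg2 _).hasDerivWithinAt).congr f_eq_g2 (f_eq_g2 _ (Set.mem_Ici.mpr le_rfl))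
    have := h1.union h2
    rw [Set.Iic_union_Ici] at this
    have hd : d (1/2 : ℝ) = d1 (1/2) := if_pos le_rfl
    rw [hd]
    exact this.hasDerivAt Filter.univ_mem
  · have : f =ᶠ[nhds y] g2 := by
      filter_upwards [Ioi_mem_nhds h] with z hz
      exact f_eq_g2 z (Set.mem_Ici.mpr (le_of_lt hz))
    have hd : d y = d2 y := if_neg (not_le.mpr h)
    rw [hd]
    exact (hg2 y).congr_of_eventuallyEq this

lemma d_antitone : AntitoneOn d (Set.Icc (0:ℝ) 1) := by
  intro x hx y hy hxy
  have d1mono : ∀ a b : ℝ, a ≤ b → d1 b ≤ d1 a := by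
    intro a b hab
    unfold d1
    have : exp (-2 * b) ≤ exp (-2 * a) := exp_le_exp.mpr (by linarith)
    linarith
  unfold d
  rcases le_or_gt y (1/2 : ℝ) with hy2 | hy2
  · rw [if_pos (hxy.trans hy2), if_pos hy2]; exact d1mono x y hxy
  · rw [if_neg (not_le.mpr hy2)]
    rcases le_or_gt x (1/2 : ℝ) with hx2 | hx2
    · rw [if_pos hx2]
      calc d2 y ≤ d2 (1/2) := d2_antitone (Set.mem_Ici.mpr le_rfl) (Set.mem_Ici.mpr hy2.le) hy2.le
        _ = d1 (1/2) := djunction.symm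
        _ ≤ d1 x := d1mono x _ hx2
    · rw [if_neg (not_le.mpr hx2)]
      exact d2_antitone hx2.le (hx2.trans_le hxy).le hxy

theorem concave_socs_matching_bound :
    (1/4 + (1/2 : ℝ)/2 - (1/4) * exp (-2 * (1/2))
        = 1 - exp (-2 * (1/2)) * ((exp 1 + 1)/4 + (exp 1 / 2) * (1/2)))
    ∧ (1/4 + (1/2 : ℝ)/2 - (1/4) * exp (-2 * (1/2)) = 1/2 - 1/(4 * exp 1))
    ∧ ConcaveOn ℝ (Set.Icc (0 : ℝ) 1)
        (fun y : ℝ => if y ≤ 1/2 then 1/4 + y/2 - (1/4) * exp (-2 * y)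
          else 1 - exp (-2 * y) * ((exp 1 + 1)/4 + (exp 1 / 2) * y)) := by
  refine ⟨junction, ?_, ?_⟩
  · show g1 (1/2) = _
    unfold g1
    rw [show (-2 : ℝ) * (1/2) = -1 by ring, exp_neg]
    have : exp 1 > 0 := exp_pos 1
    field_simp
    ring
  · have hfeq : (fun y : ℝ => if y ≤ 1/2 then 1/4 + y/2 - (1/4) * exp (-2 * y)
        else 1 - exp (-2 * y) * ((exp 1 + 1)/4 + (exp 1 / 2) * y)) = f := rfl
    rw [hfeq]
    have hdiff : ∀ y, DifferentiableAt ℝ f y := fun y => (hf y).differentiableAt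
    have hderiv : ∀ y, deriv f y = d y := fun y => (hf y).deriv
    apply AntitoneOn.concaveOn_of_deriv (convex_Icc 0 1)
    · exact fun y _ => (hdiff y).continuousAt.continuousWithinAt
    · exact fun y _ => (hdiff y).differentiableWithinAt
    · intro a ha b hb hab
      rw [hderiv a, hderiv b]
      exact d_antitone (interior_subset ha) (interior_subset hb) hab
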